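/- The function M_{AL}(a,b) = (a+b)/2 - L(a,b) is nonnegative and convex on the positive quadrant {(a,b) : a, b > 0}. -/

import Mathlib

noncomputable def logMean (a b : ℝ) : ℝ :=
  if a = b then a else (b - a) / (Real.log b - Real.log a)

open Real intervalIntegral in
lemma logMean_eq_integral {a b : ℝ} (ha : 0 < a) (hb : 0 < b) :
    logMean a b = ∫ t in (0:ℝ)..1, a ^ t * b ^ (1 - t) := by
  have hrw : (fun t : ℝ => a ^ t * b ^ (1 - t))
      = fun t : ℝ => b * Real.exp ((Real.log a - Real.log b) * t) := by
    funext t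
    rw [Real.rpow_def_of_pos ha, Real.rpow_def_of_pos hb, ← Real.exp_add]
    have hb' : b * Real.exp ((Real.log a - Real.log b) * t)
        = Real.exp (Real.log b + (Real.log a - Real.log b) * t) := by
      rw [Real.exp_add, Real.exp_log hb]
    rw [hb']
    congr 1
    ring
  rw [hrw]
  rw [intervalIntegral.integral_const_mul]
  rcases eq_or_ne a b with h | h
  · subst h
    simp [logMean]
  · have hc : Real.log a - Real.log b ≠ 0 := by
      have := Real.log_injOn_pos.ne (Set.mem_Ioi.mpr ha) (Set.mem_Ioi.mpr hb) h
      intro hh; exact this (by linarith)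
    have hc' : Real.log b - Real.log a ≠ 0 := by intro hh; exact hc (by linarith)
    have : (∫ t in (0:ℝ)..1, Real.exp ((Real.log a - Real.log b) * t))
        = (Real.log a - Real.log b)⁻¹ • ∫ t in ((Real.log a - Real.log b)*0)..((Real.log a - Real.log b)*1), Real.exp t := by
      rw [← intervalIntegral.integral_comp_mul_left _ hc]
    rw [this, integral_exp]
    simp only [mul_zero, mul_one, Real.exp_zero, smul_eq_mul]
    rw [Real.exp_sub, Real.exp_log ha, Real.exp_log hb]
    rw [logMean, if_neg h]
    rw [div_eq_iff hc']
    field_simp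
    ring

open Real in
lemma gm_continuous {c d : ℝ} (hc : 0 < c) (hd : 0 < d) :
    Continuous fun t : ℝ => c ^ t * d ^ (1 - t) := by
  have : (fun t : ℝ => c ^ t * d ^ (1 - t))
      = fun t : ℝ => Real.exp (Real.log c * t) * Real.exp (Real.log d * (1 - t)) := by
    funext t; rw [Real.rpow_def_of_pos hc, Real.rpow_def_of_pos hd]
  rw [this]; fun_prop

open Real in
lemma gm_le_am {x y t : ℝ} (hx : 0 < x) (hy : 0 < y) (ht0 : 0 ≤ t) (ht1 : t ≤ 1) :
    x ^ t * y ^ (1 - t) ≤ t * x + (1 - t) * y :=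
  Real.geom_mean_le_arith_mean2_weighted ht0 (by linarith) hx.le hy.le (by ring)

open Real in
lemma gm_concave_pt {t x y u v α β : ℝ} (ht0 : 0 ≤ t) (ht1 : t ≤ 1)
    (hx : 0 < x) (hy : 0 < y) (hu : 0 < u) (hv : 0 < v)
    (hα : 0 ≤ α) (hβ : 0 ≤ β) (hαβ : α + β = 1) :
    α * (x ^ t * y ^ (1 - t)) + β * (u ^ t * v ^ (1 - t))
      ≤ (α * x + β * u) ^ t * (α * y + β * v) ^ (1 - t) := by
  set X := α * x + β * u with hXdef
  set Y := α * y + β * v with hYdef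
  have hX : 0 < X := by
    rcases eq_or_lt_of_le hα with h | h
    · have : β = 1 := by linarith
      simp [hXdef, ← h, this, hu]
    · nlinarith
  have hY : 0 < Y := by
    rcases eq_or_lt_of_le hα with h | h
    · have : β = 1 := by linarith
      simp [hYdef, ← h, this, hv]
    · nlinarith
  have key : ∀ p q : ℝ, 0 < p → 0 < q →
      p ^ t * q ^ (1 - t) ≤ X ^ t * Y ^ (1 - t) * (t * (p / X) + (1 - t) * (q / Y)) := by
    intro p q hp hq
    have h1 := gm_le_am (div_pos hp hX) (div_pos hq hY) ht0 ht1
    have h2 : (p / X) ^ t * (q / Y) ^ (1 - t)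
        = (p ^ t * q ^ (1 - t)) / (X ^ t * Y ^ (1 - t)) := by
      rw [Real.div_rpow hp.le hX.le, Real.div_rpow hq.le hY.le]
      ring
    rw [h2, div_le_iff₀ (by positivity)] at h1
    linarith [h1]
  have k1 := key x y hx hy
  have k2 := key u v hu hv
  have hpos : 0 < X ^ t * Y ^ (1 - t) := by positivity
  have hsum : α * (t * (x / X) + (1 - t) * (y / Y)) + β * (t * (u / X) + (1 - t) * (v / Y)) = 1 := by
    field_simp
    simp only [hXdef, hYdef]
    ring
  nlinarith [mul_le_mul_of_nonneg_left k1 hα, mul_le_mul_of_nonneg_left k2 hβ,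
    mul_le_mul_of_nonneg_left (le_of_eq hsum) hpos.le]

noncomputable def MAL (p : ℝ × ℝ) : ℝ :=
  (p.1 + p.2) / 2 - logMean p.1 p.2

open Real intervalIntegral in
lemma logMean_concave :
    ConcaveOn ℝ {p : ℝ × ℝ | 0 < p.1 ∧ 0 < p.2} (fun p : ℝ × ℝ => logMean p.1 p.2) := by
  have hSconv : Convex ℝ {p : ℝ × ℝ | 0 < p.1 ∧ 0 < p.2} := by
    have : {p : ℝ × ℝ | 0 < p.1 ∧ 0 < p.2} = Set.Ioi (0:ℝ) ×ˢ Set.Ioi (0:ℝ) := by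
      ext p; simp [Set.mem_prod]
    rw [this]
    exact (convex_Ioi 0).prod (convex_Ioi 0)
  refine ⟨hSconv, ?_⟩
  rintro ⟨x, y⟩ ⟨hx, hy⟩ ⟨u, v⟩ ⟨hu, hv⟩ α β hα hβ hαβ
  simp only at hx hy hu hv
  have hmem := hSconv (show ((x, y) : ℝ × ℝ) ∈ _ from ⟨hx, hy⟩)
    (show ((u, v) : ℝ × ℝ) ∈ _ from ⟨hu, hv⟩) hα hβ hαβ
  simp only [Prod.smul_mk, Prod.mk_add_mk, smul_eq_mul, Set.mem_setOf_eq] at hmem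
  obtain ⟨hX, hY⟩ := hmem
  simp only [smul_eq_mul, Prod.smul_mk, Prod.mk_add_mk]
  rw [logMean_eq_integral hx hy, logMean_eq_integral hu hv, logMean_eq_integral hX hY]
  have i1 : IntervalIntegrable (fun t : ℝ => x ^ t * y ^ (1 - t)) MeasureTheory.volume 0 1 :=
    (gm_continuous hx hy).intervalIntegrable 0 1
  have i2 : IntervalIntegrable (fun t : ℝ => u ^ t * v ^ (1 - t)) MeasureTheory.volume 0 1 :=
    (gm_continuous hu hv).intervalIntegrable 0 1
  rw [← intervalIntegral.integral_const_mul, ← intervalIntegral.integral_const_mul,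
    ← intervalIntegral.integral_add (i1.const_mul α) (i2.const_mul β)]
  apply intervalIntegral.integral_mono_on zero_le_one
    ((i1.const_mul α).add (i2.const_mul β))
    ((gm_continuous hX hY).intervalIntegrable 0 1)
  intro t ht
  exact gm_concave_pt ht.1 ht.2 hx hy hu hv hα hβ hαβ

theorem MAL_nonneg_convex :
    (∀ a b : ℝ, 0 < a → 0 < b → 0 ≤ MAL (a, b)) ∧
      ConvexOn ℝ {p : ℝ × ℝ | 0 < p.1 ∧ 0 < p.2} MAL := by
  constructor
  · intro a b ha hb
    have h1 : logMean a b ≤ (a + b) / 2 := by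
      rw [logMean_eq_integral ha hb]
      have key : (∫ t in (0:ℝ)..1, (t * a + (1 - t) * b)) = (a + b) / 2 := by
        have ia : IntervalIntegrable (fun t : ℝ => t * a) MeasureTheory.volume 0 1 :=
          (continuous_id.mul continuous_const).intervalIntegrable 0 1
        have ib : IntervalIntegrable (fun t : ℝ => (1 - t) * b) MeasureTheory.volume 0 1 :=
          (((continuous_const).sub continuous_id).mul continuous_const).intervalIntegrable 0 1
        have hid : IntervalIntegrable (fun x : ℝ => x) MeasureTheory.volume 0 1 := by
          apply Continuous.intervalIntegrable; fun_prop
        have h12 : (∫ x in (0:ℝ)..1, ((1:ℝ) - x)) = 1/2 := by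
          rw [intervalIntegral.integral_sub intervalIntegrable_const hid, integral_id,
            integral_one]
          norm_num
        rw [intervalIntegral.integral_add ia ib, intervalIntegral.integral_mul_const,
          intervalIntegral.integral_mul_const, integral_id, h12]
        ring
      rw [← key]
      apply intervalIntegral.integral_mono_on zero_le_one
        ((gm_continuous ha hb).intervalIntegrable 0 1)
        (((continuous_id.mul continuous_const).add
          (((continuous_const).sub continuous_id).mul continuous_const)).intervalIntegrable 0 1)
      intro t ht
      exact gm_le_am ha hb ht.1 ht.2
    simp only [MAL]
    linarith
  · have hlin : ConvexOn ℝ {p : ℝ × ℝ | 0 < p.1 ∧ 0 < p.2} (fun p : ℝ × ℝ => (p.1 + p.2) / 2) := by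
      refine ⟨logMean_concave.1, ?_⟩
      intro x _ y _ α β hα hβ hαβ
      simp only [smul_eq_mul, Prod.fst_add, Prod.snd_add, Prod.smul_fst, Prod.smul_snd]
      apply le_of_eq
      ring
    have := hlin.sub logMean_concave
    convert this using 1
    all_goals rfl
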